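/- Let y_1,...,y_N be real numbers with y_i ≠ y_j for some i,j, and let H be the open interval (min_i y_i, max_i y_i). Then the function μ ↦ log L(μ) is strictly concave on H, where L(μ) = sup{∏_{i=1}^N w_i : ∑ w_i y_i = μ, w_i > 0, ∑ w_i = 1}. -/

import Mathlib

lemma amgm_gap {t a b : ℝ} (ht0 : 0 < t) (ht1 : t ≤ 1/2) (ha : 0 < a) (ha1 : a ≤ 1)
    (hb : 0 < b) (hb1 : b ≤ 1) :
    a ^ t * b ^ (1 - t) + t * (a - b) ^ 2 / 4 ≤ t * a + (1 - t) * b := by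
  have hsab : Real.sqrt (a * b) = Real.sqrt a * Real.sqrt b := Real.sqrt_mul ha.le b
  have h1 : Real.sqrt (a*b) ^ (2*t) * b ^ (1 - 2*t) ≤ 2*t * Real.sqrt (a*b) + (1 - 2*t) * b :=
    Real.geom_mean_le_arith_mean2_weighted (by linarith) (by linarith) (Real.sqrt_nonneg _)
      hb.le (by ring)
  have h2 : Real.sqrt (a*b) ^ (2*t) = a ^ t * b ^ t := by
    rw [Real.sqrt_eq_rpow, ← Real.rpow_mul (by positivity),
      show (1:ℝ)/2 * (2*t) = t by ring, Real.mul_rpow ha.le hb.le]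
  have h3 : b ^ t * b ^ (1 - 2*t) = b ^ (1 - t) := by
    rw [← Real.rpow_add hb]; ring_nf
  have h1' : a ^ t * b ^ (1 - t) ≤ 2*t * Real.sqrt (a*b) + (1 - 2*t) * b := by
    calc a ^ t * b ^ (1-t) = a ^ t * b ^ t * b ^ (1 - 2*t) := by rw [mul_assoc, h3]
    _ ≤ _ := by rw [← h2]; exact h1
  set sa := Real.sqrt a with hsa
  set sb := Real.sqrt b with hsb
  have e1 : sa ^ 2 = a := Real.sq_sqrt ha.le
  have e2 : sb ^ 2 = b := Real.sq_sqrt hb.le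
  have p1 : 0 ≤ sa := Real.sqrt_nonneg a
  have p2 : 0 ≤ sb := Real.sqrt_nonneg b
  have l1 : sa ≤ 1 := Real.sqrt_le_one.mpr ha1
  have l2 : sb ≤ 1 := Real.sqrt_le_one.mpr hb1
  rw [hsab] at h1'
  rw [← e1, ← e2] at h1' ⊢
  nlinarith [h1', mul_nonneg (mul_nonneg (mul_nonneg ht0.le (sq_nonneg (sa - sb)))
      (by linarith : (0:ℝ) ≤ 2 - sa - sb)) (by linarith : (0:ℝ) ≤ 2 + sa + sb)]



lemma amgm_gap' {t u a b : ℝ} (ht0 : 0 < t) (hu0 : 0 < u) (htu : t + u = 1)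
    (ha : 0 < a) (ha1 : a ≤ 1) (hb : 0 < b) (hb1 : b ≤ 1) :
    a ^ t * b ^ u + min t u * (a - b) ^ 2 / 4 ≤ t * a + u * b := by
  rcases le_total t (1/2) with h | h
  · have := amgm_gap ht0 h ha ha1 hb hb1
    have hm : min t u = t := min_eq_left (by linarith)
    rw [hm, show u = 1 - t by linarith]
    linarith [this]
  · have := amgm_gap hu0 (by linarith) hb hb1 ha ha1
    have hm : min t u = u := min_eq_right (by linarith)
    rw [hm]
    have ht' : t = 1 - u := by linarith
    rw [ht']
    linarith [this]



lemma prod_gap {N : ℕ} {w₁ w₂ : Fin N → ℝ} {t u : ℝ} (ht0 : 0 < t) (hu0 : 0 < u)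
    (htu : t + u = 1) (hw₁ : ∀ k, 0 < w₁ k) (hw₁1 : ∀ k, w₁ k ≤ 1)
    (hw₂ : ∀ k, 0 < w₂ k) (hw₂1 : ∀ k, w₂ k ≤ 1) (k₀ : Fin N) :
    (1 + min t u * (w₁ k₀ - w₂ k₀) ^ 2 / 4) * ((∏ k, w₁ k) ^ t * (∏ k, w₂ k) ^ u)
      ≤ ∏ k, (t * w₁ k + u * w₂ k) := by
  set G : Fin N → ℝ := fun k => w₁ k ^ t * w₂ k ^ u with hG
  have hGpos : ∀ k, 0 < G k := fun k => by
    exact mul_pos (Real.rpow_pos_of_pos (hw₁ k) t) (Real.rpow_pos_of_pos (hw₂ k) u)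
  have hG1 : ∀ k, G k ≤ 1 := fun k => by
    simp only [hG]
    have := Real.rpow_le_one (hw₁ k).le (hw₁1 k) ht0.le
    have := Real.rpow_le_one (hw₂ k).le (hw₂1 k) hu0.le
    nlinarith [ (Real.rpow_pos_of_pos (hw₁ k) t), (Real.rpow_pos_of_pos (hw₂ k) u)]
  have hprodG : ∏ k, G k = (∏ k, w₁ k) ^ t * (∏ k, w₂ k) ^ u := by
    rw [hG, Finset.prod_mul_distrib,
      ← Real.finset_prod_rpow _ _ (fun k _ => (hw₁ k).le) t,
      ← Real.finset_prod_rpow _ _ (fun k _ => (hw₂ k).le) u]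
  have hGle : ∀ k, G k ≤ t * w₁ k + u * w₂ k := fun k => by
    simp only [hG]
    have := amgm_gap' ht0 hu0 htu (hw₁ k) (hw₁1 k) (hw₂ k) (hw₂1 k)
    nlinarith [mul_nonneg (le_min ht0.le hu0.le) (sq_nonneg (w₁ k - w₂ k))]
  have hmemk₀ : k₀ ∈ Finset.univ := Finset.mem_univ k₀
  set ε := min t u * (w₁ k₀ - w₂ k₀) ^ 2 / 4 with hε
  have hε0 : 0 ≤ ε := by
    have : 0 ≤ min t u := le_min ht0.le hu0.le
    positivity
  have hprod_erase : ∏ k ∈ Finset.univ.erase k₀, G k ≤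
      ∏ k ∈ Finset.univ.erase k₀, (t * w₁ k + u * w₂ k) :=
    Finset.prod_le_prod (fun k _ => (hGpos k).le) (fun k _ => hGle k)
  have key1 : G k₀ + ε ≤ t * w₁ k₀ + u * w₂ k₀ := by
    simp only [hG, hε]
    have := amgm_gap' ht0 hu0 htu (hw₁ k₀) (hw₁1 k₀) (hw₂ k₀) (hw₂1 k₀)
    linarith
  have hGeq : ∏ k, G k = G k₀ * ∏ k ∈ Finset.univ.erase k₀, G k :=
    (Finset.mul_prod_erase _ _ hmemk₀).symm
  have hWeq : ∏ k, (t * w₁ k + u * w₂ k)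
      = (t * w₁ k₀ + u * w₂ k₀) * ∏ k ∈ Finset.univ.erase k₀, (t * w₁ k + u * w₂ k) :=
    (Finset.mul_prod_erase _ _ hmemk₀).symm
  have hPE : 0 < ∏ k ∈ Finset.univ.erase k₀, G k :=
    Finset.prod_pos (fun k _ => hGpos k)
  have hfullE : ∏ k, G k ≤ ∏ k ∈ Finset.univ.erase k₀, G k := by
    rw [hGeq]
    nlinarith [hG1 k₀, (hGpos k₀)]
  calc (1 + ε) * ((∏ k, w₁ k) ^ t * (∏ k, w₂ k) ^ u)
      = ∏ k, G k + ε * ∏ k, G k := by rw [← hprodG]; ring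
    _ ≤ ∏ k, G k + ε * ∏ k ∈ Finset.univ.erase k₀, G k := by
        nlinarith [hε0, hfullE]
    _ = (G k₀ + ε) * ∏ k ∈ Finset.univ.erase k₀, G k := by rw [hGeq]; ring
    _ ≤ (t * w₁ k₀ + u * w₂ k₀) * ∏ k ∈ Finset.univ.erase k₀, (t * w₁ k + u * w₂ k) := by
        apply mul_le_mul key1 hprod_erase hPE.le
        nlinarith [hw₁ k₀, hw₂ k₀]
    _ = ∏ k, (t * w₁ k + u * w₂ k) := hWeq.symm



lemma exists_feasible (N : ℕ) (y : Fin N → ℝ) (hne : (Finset.univ : Finset (Fin N)).Nonempty)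
    {μ : ℝ} (hμ : μ ∈ Set.Ioo (Finset.univ.inf' hne y) (Finset.univ.sup' hne y)) :
    ∃ w : Fin N → ℝ, (∀ k, 0 < w k) ∧ ∑ k, w k = 1 ∧ ∑ k, w k * y k = μ := by
  obtain ⟨m, -, hm⟩ := Finset.exists_mem_eq_inf' hne y
  obtain ⟨M, -, hM⟩ := Finset.exists_mem_eq_sup' hne y
  obtain ⟨hμ1, hμ2⟩ := hμ
  rw [hm] at hμ1
  rw [hM] at hμ2
  set a := y m with hadef
  set b := y M with hbdef
  have hab : a < b := lt_trans hμ1 hμ2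
  have hN0 : 0 < N := by
    obtain ⟨k, -⟩ := hne; exact k.pos
  have hNr : (0:ℝ) < N := by exact_mod_cast hN0
  have hlow : ∀ k, a ≤ y k := fun k => hm ▸ Finset.inf'_le y (Finset.mem_univ k)
  have hhigh : ∀ k, y k ≤ b := fun k => hM ▸ Finset.le_sup' y (Finset.mem_univ k)
  set ybar := (∑ k, y k) / N with hybar
  have hysum : ∑ k, y k = N * ybar := by rw [hybar]; field_simp
  have hyb1 : a ≤ ybar := by
    rw [hybar, le_div_iff₀ hNr]
    calc a * N = ∑ _k : Fin N, a := by
          rw [Finset.sum_const, Finset.card_univ, Fintype.card_fin, nsmul_eq_mul]; ring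
    _ ≤ ∑ k, y k := Finset.sum_le_sum (fun k _ => hlow k)
  have hyb2 : ybar ≤ b := by
    rw [hybar, div_le_iff₀ hNr]
    calc ∑ k, y k ≤ ∑ _k : Fin N, b := Finset.sum_le_sum (fun k _ => hhigh k)
    _ = b * N := by
          rw [Finset.sum_const, Finset.card_univ, Fintype.card_fin, nsmul_eq_mul]; ring
  have hba : 0 < b - a := by linarith
  obtain ⟨s, hs0, hs1, hsb1, hsb2⟩ :
      ∃ s : ℝ, 0 < s ∧ s < 1 ∧ b - μ < s * (b - a) ∧ μ - a < s * (b - a) := by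
    refine ⟨(max ((b - μ)/(b - a)) ((μ - a)/(b - a)) + 1)/2, ?_, ?_, ?_, ?_⟩
    · have := le_max_left ((b - μ)/(b - a)) ((μ - a)/(b - a))
      have := div_pos (by linarith : 0 < b - μ) hba
      linarith
    · have h1 : (b - μ)/(b - a) < 1 := (div_lt_one hba).mpr (by linarith)
      have h2 : (μ - a)/(b - a) < 1 := (div_lt_one hba).mpr (by linarith)
      rcases max_cases ((b - μ)/(b - a)) ((μ - a)/(b - a)) with ⟨h, -⟩ | ⟨h, -⟩ <;>
        rw [h] <;> linarith
    · rw [← div_lt_iff₀ hba]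
      have h1 : (b - μ)/(b - a) < 1 := (div_lt_one hba).mpr (by linarith)
      have h2 : (μ - a)/(b - a) < 1 := (div_lt_one hba).mpr (by linarith)
      have := le_max_left ((b - μ)/(b - a)) ((μ - a)/(b - a))
      rcases max_cases ((b - μ)/(b - a)) ((μ - a)/(b - a)) with ⟨h, -⟩ | ⟨h, h'⟩ <;>
        rw [h] <;> linarith
    · rw [← div_lt_iff₀ hba]
      have h1 : (b - μ)/(b - a) < 1 := (div_lt_one hba).mpr (by linarith)
      have h2 : (μ - a)/(b - a) < 1 := (div_lt_one hba).mpr (by linarith)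
      have := le_max_right ((b - μ)/(b - a)) ((μ - a)/(b - a))
      rcases max_cases ((b - μ)/(b - a)) ((μ - a)/(b - a)) with ⟨h, h'⟩ | ⟨h, -⟩ <;>
        rw [h] <;> linarith
  have hf0μ : (1 - s) * ybar + s * a < μ := by nlinarith
  have hf1μ : μ < (1 - s) * ybar + s * b := by nlinarith
  have hsba : 0 < s * (b - a) := mul_pos hs0 hba
  obtain ⟨θ, hθ0, hθ1, hθs⟩ :
      ∃ θ : ℝ, 0 < θ ∧ θ < 1 ∧ θ * (s * (b - a)) = μ - ((1 - s) * ybar + s * a) := by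
    refine ⟨(μ - ((1 - s) * ybar + s * a)) / (s * (b - a)), div_pos (by linarith) hsba,
      ?_, by field_simp⟩
    rw [div_lt_one hsba]
    nlinarith
  have hmM : m ≠ M := fun h => by rw [hadef, hbdef, h] at hab; exact lt_irrefl _ hab
  refine ⟨fun k => (1 - s)/N + s*θ*(if k = M then 1 else 0) + s*(1-θ)*(if k = m then 1 else 0),
    ?_, ?_, ?_⟩
  · intro k
    have h1 : 0 < (1 - s)/N := div_pos (by linarith) hNr
    have h2 : 0 ≤ s*θ*(if k = M then 1 else 0) := by positivity
    have h3 : 0 ≤ s*(1-θ)*(if k = m then 1 else 0) := by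
      have : (0:ℝ) ≤ 1 - θ := by linarith
      positivity
    linarith
  · rw [Finset.sum_add_distrib, Finset.sum_add_distrib, ← Finset.mul_sum, ← Finset.mul_sum]
    simp only [Finset.sum_ite_eq', Finset.mem_univ, if_true, Finset.sum_const,
      Finset.card_univ, Fintype.card_fin, nsmul_eq_mul]
    field_simp
    ring
  · have hexp : ∀ k, ((1 - s)/N + s*θ*(if k = M then 1 else 0)
        + s*(1-θ)*(if k = m then 1 else 0)) * y k
        = (1 - s)/N * y k + s*θ*(if k = M then y k else 0)
          + s*(1-θ)*(if k = m then y k else 0) := by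
      intro k
      by_cases h1 : k = M
      · subst h1
        rw [if_pos rfl, if_neg (fun h => hmM h.symm), if_pos rfl,
          if_neg (fun h => hmM h.symm)]
        ring
      · by_cases h2 : k = m
        · subst h2
          rw [if_neg h1, if_pos rfl, if_neg h1, if_pos rfl]
          ring
        · rw [if_neg h1, if_neg h2, if_neg h1, if_neg h2]
          ring
    rw [Finset.sum_congr rfl (fun k _ => hexp k), Finset.sum_add_distrib,
      Finset.sum_add_distrib, ← Finset.mul_sum, ← Finset.mul_sum, ← Finset.mul_sum]
    simp only [Finset.sum_ite_eq', Finset.mem_univ, if_true]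
    rw [hysum, ← hadef, ← hbdef]
    have hNne : (N:ℝ) ≠ 0 := ne_of_gt hNr
    field_simp
    linear_combination hθs



theorem stmt2 (N : ℕ) (y : Fin N → ℝ) (i j : Fin N) (hij : y i ≠ y j)
    (L : ℝ → ℝ)
    (hL : ∀ μ, L μ = sSup {x : ℝ | ∃ w : Fin N → ℝ,
      (∀ k, 0 < w k) ∧ ∑ k, w k = 1 ∧ ∑ k, w k * y k = μ ∧ x = ∏ k, w k}) :
    StrictConcaveOn ℝ
      (Set.Ioo (Finset.univ.inf' ⟨i, Finset.mem_univ i⟩ y)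
               (Finset.univ.sup' ⟨i, Finset.mem_univ i⟩ y))
      (fun μ => Real.log (L μ)) := by
  have hne : (Finset.univ : Finset (Fin N)).Nonempty := ⟨i, Finset.mem_univ i⟩
  set S : ℝ → Set ℝ := fun μ => {x : ℝ | ∃ w : Fin N → ℝ,
      (∀ k, 0 < w k) ∧ ∑ k, w k = 1 ∧ ∑ k, w k * y k = μ ∧ x = ∏ k, w k} with hS
  have hwle1 : ∀ (w : Fin N → ℝ), (∀ k, 0 < w k) → (∑ k, w k = 1) → ∀ k, w k ≤ 1 := by
    intro w hpos hsum k
    have := Finset.single_le_sum (f := w) (fun l _ => (hpos l).le) (Finset.mem_univ k)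
    linarith
  have hSprop : ∀ μ, ∀ x ∈ S μ, 0 < x ∧ x ≤ 1 := by
    rintro μ x ⟨w, hpos, hsum, -, rfl⟩
    constructor
    · exact Finset.prod_pos (fun k _ => hpos k)
    · exact Finset.prod_le_one (fun k _ => (hpos k).le) (fun k _ => hwle1 w hpos hsum k)
  have hbdd : ∀ μ, BddAbove (S μ) := fun μ => ⟨1, fun x hx => (hSprop μ x hx).2⟩
  have hSne : ∀ μ ∈ Set.Ioo (Finset.univ.inf' hne y) (Finset.univ.sup' hne y),
      (S μ).Nonempty := by
    intro μ hμ
    obtain ⟨w, h1, h2, h3⟩ := exists_feasible N y hne hμ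
    exact ⟨∏ k, w k, w, h1, h2, h3, rfl⟩
  have hLS : ∀ μ, L μ = sSup (S μ) := hL
  have hLpos : ∀ μ ∈ Set.Ioo (Finset.univ.inf' hne y) (Finset.univ.sup' hne y), 0 < L μ := by
    intro μ hμ
    obtain ⟨x, hx⟩ := hSne μ hμ
    have := le_csSup (hbdd μ) hx
    rw [hLS μ]
    linarith [(hSprop μ x hx).1]
  constructor
  · exact convex_Ioo _ _
  intro μ₁ hμ₁ μ₂ hμ₂ hμne t u ht hu htu
  simp only [smul_eq_mul]
  have hμt : t * μ₁ + u * μ₂ ∈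
      Set.Ioo (Finset.univ.inf' hne y) (Finset.univ.sup' hne y) := by
    have := (convex_Ioo (Finset.univ.inf' hne y) (Finset.univ.sup' hne y)) hμ₁ hμ₂ ht.le hu.le htu
    simpa using this
  set M0 : ℝ := ∑ k, |y k| with hM0def
  have hM0 : 0 < M0 := by
    rcases lt_or_eq_of_le (Finset.sum_nonneg (fun k _ => abs_nonneg (y k))) with h | h
    · exact h
    · exfalso
      have hall := (Finset.sum_eq_zero_iff_of_nonneg (fun k _ => abs_nonneg (y k))).mp h.symm
      have hyi : y i = 0 := abs_eq_zero.mp (hall i (Finset.mem_univ i))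
      have hyj : y j = 0 := abs_eq_zero.mp (hall j (Finset.mem_univ j))
      exact hij (hyi.trans hyj.symm)
  set δ : ℝ := |μ₁ - μ₂| / M0 with hδdef
  have hδ : 0 < δ := div_pos (abs_pos.mpr (sub_ne_zero.mpr hμne)) hM0
  set ε : ℝ := min t u * δ ^ 2 / 4 with hεdef
  have hε : 0 < ε := by
    have := lt_min ht hu
    positivity
  have key : ∀ A ∈ S μ₁, ∀ B ∈ S μ₂,
      (1 + ε) * (A ^ t * B ^ u) ≤ L (t * μ₁ + u * μ₂) := by
    rintro A ⟨w₁, hw₁, hsum₁, hval₁, rfl⟩ B ⟨w₂, hw₂, hsum₂, hval₂, rfl⟩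
    obtain ⟨k₀, -, hk₀⟩ := Finset.exists_max_image Finset.univ
      (fun k => |w₁ k - w₂ k|) hne
    have hc : δ ≤ |w₁ k₀ - w₂ k₀| := by
      rw [hδdef, div_le_iff₀ hM0]
      calc |μ₁ - μ₂| = |∑ k, (w₁ k * y k - w₂ k * y k)| := by
            rw [Finset.sum_sub_distrib, hval₁, hval₂]
      _ ≤ ∑ k, |w₁ k * y k - w₂ k * y k| := Finset.abs_sum_le_sum_abs _ _
      _ = ∑ k, |w₁ k - w₂ k| * |y k| := by
            refine Finset.sum_congr rfl (fun k _ => ?_)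
            rw [← abs_mul, sub_mul]
      _ ≤ ∑ k, |w₁ k₀ - w₂ k₀| * |y k| := by
            refine Finset.sum_le_sum (fun k _ => ?_)
            exact mul_le_mul_of_nonneg_right (hk₀ k (Finset.mem_univ k)) (abs_nonneg _)
      _ = |w₁ k₀ - w₂ k₀| * M0 := by rw [← Finset.mul_sum]
    have hgap := prod_gap ht hu htu hw₁ (hwle1 w₁ hw₁ hsum₁) hw₂ (hwle1 w₂ hw₂ hsum₂) k₀
    have hABpos : 0 < (∏ k, w₁ k) ^ t * (∏ k, w₂ k) ^ u := by
      have h1 : 0 < ∏ k, w₁ k := Finset.prod_pos (fun k _ => hw₁ k)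
      have h2 : 0 < ∏ k, w₂ k := Finset.prod_pos (fun k _ => hw₂ k)
      positivity
    have hεle : ε ≤ min t u * (w₁ k₀ - w₂ k₀) ^ 2 / 4 := by
      rw [hεdef]
      have hsq : δ ^ 2 ≤ (w₁ k₀ - w₂ k₀) ^ 2 := by
        rw [← sq_abs (w₁ k₀ - w₂ k₀)]
        exact pow_le_pow_left₀ hδ.le hc 2
      have hmt : 0 ≤ min t u := le_min ht.le hu.le
      nlinarith
    have hstep : (1 + ε) * ((∏ k, w₁ k) ^ t * (∏ k, w₂ k) ^ u)
        ≤ ∏ k, (t * w₁ k + u * w₂ k) := by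
      calc (1 + ε) * ((∏ k, w₁ k) ^ t * (∏ k, w₂ k) ^ u)
          ≤ (1 + min t u * (w₁ k₀ - w₂ k₀) ^ 2 / 4) * ((∏ k, w₁ k) ^ t * (∏ k, w₂ k) ^ u) := by
            apply mul_le_mul_of_nonneg_right (by linarith) hABpos.le
        _ ≤ _ := hgap
    have hmem : (∏ k, (t * w₁ k + u * w₂ k)) ∈ S (t * μ₁ + u * μ₂) := by
      refine ⟨fun k => t * w₁ k + u * w₂ k, ?_, ?_, ?_, rfl⟩
      · intro k
        show 0 < t * w₁ k + u * w₂ k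
        have h1 := mul_pos ht (hw₁ k)
        have h2 := mul_pos hu (hw₂ k)
        linarith
      · rw [Finset.sum_add_distrib, ← Finset.mul_sum, ← Finset.mul_sum, hsum₁, hsum₂]
        linarith
      · have hexp : ∀ k, (t * w₁ k + u * w₂ k) * y k
            = t * (w₁ k * y k) + u * (w₂ k * y k) := fun k => by ring
        rw [Finset.sum_congr rfl (fun k _ => hexp k), Finset.sum_add_distrib,
          ← Finset.mul_sum, ← Finset.mul_sum, hval₁, hval₂]
    rw [hLS]
    exact le_trans hstep (le_csSup (hbdd _) hmem)
  have hL₁ := hLpos μ₁ hμ₁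
  have hL₂ := hLpos μ₂ hμ₂
  have hLt := hLpos _ hμt
  have hmain : t * Real.log (L μ₁) + u * Real.log (L μ₂) + Real.log (1 + ε)
      ≤ Real.log (L (t * μ₁ + u * μ₂)) := by
    apply le_of_forall_pos_le_add
    intro c hc
    obtain ⟨A, hAmem, hAgt⟩ : ∃ A ∈ S μ₁, L μ₁ * Real.exp (-(c / (2 * t))) < A := by
      apply exists_lt_of_lt_csSup (hSne μ₁ hμ₁)
      rw [← hLS]
      nlinarith [Real.exp_lt_one_iff.mpr (neg_lt_zero.mpr (by positivity : (0:ℝ) < c / (2 * t))), hL₁, Real.exp_pos (-(c / (2 * t)))]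
    obtain ⟨B, hBmem, hBgt⟩ : ∃ B ∈ S μ₂, L μ₂ * Real.exp (-(c / (2 * u))) < B := by
      apply exists_lt_of_lt_csSup (hSne μ₂ hμ₂)
      rw [← hLS]
      nlinarith [Real.exp_lt_one_iff.mpr (neg_lt_zero.mpr (by positivity : (0:ℝ) < c / (2 * u))), hL₂, Real.exp_pos (-(c / (2 * u)))]
    have hApos := (hSprop μ₁ A hAmem).1
    have hBpos := (hSprop μ₂ B hBmem).1
    have hkey := key A hAmem B hBmem
    have hlogA : Real.log (L μ₁) + -(c / (2*t)) ≤ Real.log A := by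
      have h := Real.log_le_log (by positivity) hAgt.le
      rwa [Real.log_mul (ne_of_gt hL₁) (Real.exp_ne_zero _), Real.log_exp] at h
    have hlogB : Real.log (L μ₂) + -(c / (2*u)) ≤ Real.log B := by
      have h := Real.log_le_log (by positivity) hBgt.le
      rwa [Real.log_mul (ne_of_gt hL₂) (Real.exp_ne_zero _), Real.log_exp] at h
    have hlogkey : Real.log (1+ε) + (t * Real.log A + u * Real.log B)
        ≤ Real.log (L (t*μ₁+u*μ₂)) := by
      have h := Real.log_le_log (by positivity) hkey
      rwa [Real.log_mul (by positivity) (by positivity),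
        Real.log_mul (by positivity) (by positivity),
        Real.log_rpow hApos, Real.log_rpow hBpos] at h
    have htA := mul_le_mul_of_nonneg_left hlogA ht.le
    have htB := mul_le_mul_of_nonneg_left hlogB hu.le
    have ht2 : t * (Real.log (L μ₁) + -(c / (2*t))) = t * Real.log (L μ₁) - c/2 := by
      field_simp
      ring
    have hu2 : u * (Real.log (L μ₂) + -(c / (2*u))) = u * Real.log (L μ₂) - c/2 := by
      field_simp
      ring
    rw [ht2] at htA
    rw [hu2] at htB
    linarith
  have hlog1ε : 0 < Real.log (1 + ε) := Real.log_pos (by linarith)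
  linarith
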